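/- Given any p ∈ [1, ∞), the sample mean of n points in [-r, r] satisfies the ℓ_p average-case stability bound: (1/(n+1)^2) sup over datasets (X_1,...,X_{n+1}) ∈ [-r,r]^{n+1} of ∑_{1 ≤ i, j ≤ n+1} |θ̂(D^{\i}) - θ̂(D^{\j})|^p ≤ (1/2)(2r/n)^p, where θ̂ is the sample mean on n points and D^{\i} deletes X_i. -/

import Mathlib

open Finset

/-- ℓ_p average-case stability of the sample mean: for any `p ≥ 1` and any dataset
in `[-r,r]^{n+1}`, `(1/(n+1)^2) ∑_{i,j} |θ̂(D^{\i}) - θ̂(D^{\j})|^p ≤ (1/2)(2r/n)^p`. -/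
theorem sample_mean_lp_stability (n : ℕ) (hn : 1 ≤ n) (r : ℝ) (hr : 0 < r)
    (p : ℝ) (hp : 1 ≤ p)
    (X : Fin (n + 1) → ℝ) (hX : ∀ i, |X i| ≤ r) :
    (1 / ((n : ℝ) + 1) ^ 2) *
      ∑ i : Fin (n + 1), ∑ j : Fin (n + 1),
        |((∑ k, X k) - X i) / (n : ℝ) - ((∑ k, X k) - X j) / (n : ℝ)| ^ p
      ≤ (1 / 2) * (2 * r / (n : ℝ)) ^ p := by
  have hn0 : (0:ℝ) < n := by exact_mod_cast hn
  -- pairwise linear bound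
  have hpair : ∀ i j : Fin (n+1), |X i - X j| ≤ r - X i * X j / r := by
    intro i j
    have h1 := abs_le.mp (hX i)
    have h2 := abs_le.mp (hX j)
    have hrw2 : r - X i * X j / r = (r * r - X i * X j) / r := by field_simp
    rw [hrw2, le_div_iff₀ hr]
    rcases le_total (X i) (X j) with h | h
    · rw [abs_of_nonpos (by linarith)]
      nlinarith [mul_nonneg (sub_nonneg.mpr h2.2) (by linarith : (0:ℝ) ≤ r + X i)]
    · rw [abs_of_nonneg (by linarith)]
      nlinarith [mul_nonneg (sub_nonneg.mpr h1.2) (by linarith : (0:ℝ) ≤ r + X j)]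
  -- sum of |X i - X j| is at most (n+1)^2 r
  have hsum : ∑ i : Fin (n+1), ∑ j : Fin (n+1), |X i - X j| ≤ ((n:ℝ)+1)^2 * r := by
    have h1 : ∑ i : Fin (n+1), ∑ j : Fin (n+1), |X i - X j|
        ≤ ∑ i : Fin (n+1), ∑ j : Fin (n+1), (r - X i * X j / r) := by
      refine Finset.sum_le_sum fun i _ => Finset.sum_le_sum fun j _ => hpair i j
    have h2 : ∑ i : Fin (n+1), ∑ j : Fin (n+1), (r - X i * X j / r)
        = ((n:ℝ)+1)^2 * r - (∑ k, X k)^2 / r := by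
      simp only [Finset.sum_sub_distrib, Finset.sum_const, Finset.card_univ,
        Fintype.card_fin, nsmul_eq_mul, ← Finset.sum_div, ← Finset.mul_sum,
        ← Finset.sum_mul]
      push_cast
      ring
    have h3 : (0:ℝ) ≤ (∑ k, X k)^2 / r := by positivity
    linarith
  -- pointwise rpow bound
  have hterm : ∀ i j : Fin (n+1), |X i - X j| ^ p ≤ (2*r) ^ (p-1) * |X i - X j| := by
    intro i j
    set t := |X i - X j| with ht
    have ht0 : 0 ≤ t := abs_nonneg _
    have ht2 : t ≤ 2*r := by
      calc t ≤ |X i| + |X j| := abs_sub _ _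
        _ ≤ 2*r := by linarith [hX i, hX j]
    rcases eq_or_lt_of_le ht0 with h0 | h0
    · rw [← h0, Real.zero_rpow (by linarith : p ≠ 0)]
      positivity
    · calc t ^ p = t ^ (p-1) * t := by
            rw [← Real.rpow_add_one h0.ne' (p-1)]; norm_num
        _ ≤ (2*r) ^ (p-1) * t := by
            exact mul_le_mul_of_nonneg_right
              (Real.rpow_le_rpow ht0 ht2 (by linarith)) ht0
  -- rewrite the summand
  have hrw : ∀ i j : Fin (n+1),
      |((∑ k, X k) - X i) / (n:ℝ) - ((∑ k, X k) - X j) / (n:ℝ)| ^ p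
        = |X i - X j| ^ p / (n:ℝ) ^ p := by
    intro i j
    have : ((∑ k, X k) - X i) / (n:ℝ) - ((∑ k, X k) - X j) / (n:ℝ)
        = (X j - X i) / (n:ℝ) := by field_simp; ring
    rw [this, abs_div, abs_of_pos hn0, abs_sub_comm,
      Real.div_rpow (abs_nonneg _) hn0.le]
  have hbig : ∑ i : Fin (n+1), ∑ j : Fin (n+1),
      |((∑ k, X k) - X i) / (n:ℝ) - ((∑ k, X k) - X j) / (n:ℝ)| ^ p
      ≤ (2*r) ^ (p-1) / (n:ℝ) ^ p * (((n:ℝ)+1)^2 * r) := by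
    have step1 : ∑ i : Fin (n+1), ∑ j : Fin (n+1),
        |((∑ k, X k) - X i) / (n:ℝ) - ((∑ k, X k) - X j) / (n:ℝ)| ^ p
        ≤ ∑ i : Fin (n+1), ∑ j : Fin (n+1),
            (2*r) ^ (p-1) / (n:ℝ) ^ p * |X i - X j| := by
      refine Finset.sum_le_sum fun i _ => Finset.sum_le_sum fun j _ => ?_
      rw [hrw i j, div_mul_eq_mul_div, div_le_div_iff₀ (by positivity) (by positivity)]
      have := hterm i j
      nlinarith [Real.rpow_pos_of_pos hn0 p]
    calc _ ≤ ∑ i : Fin (n+1), ∑ j : Fin (n+1),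
            (2*r) ^ (p-1) / (n:ℝ) ^ p * |X i - X j| := step1
      _ = (2*r) ^ (p-1) / (n:ℝ) ^ p *
            ∑ i : Fin (n+1), ∑ j : Fin (n+1), |X i - X j| := by
          simp [Finset.mul_sum]
      _ ≤ (2*r) ^ (p-1) / (n:ℝ) ^ p * (((n:ℝ)+1)^2 * r) := by
          exact mul_le_mul_of_nonneg_left hsum (by positivity)
  -- final arithmetic
  have hfin : (1 / ((n : ℝ) + 1) ^ 2) *
      ((2*r) ^ (p-1) / (n:ℝ) ^ p * (((n:ℝ)+1)^2 * r))
      = (1 / 2) * (2 * r / (n : ℝ)) ^ p := by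
    have h2r : (0:ℝ) < 2*r := by linarith
    have hsplit : (2*r) ^ p = (2*r) ^ (p-1) * (2*r) := by
      rw [← Real.rpow_add_one h2r.ne' (p-1)]; norm_num
    rw [Real.div_rpow h2r.le hn0.le, hsplit]
    field_simp
  calc (1 / ((n : ℝ) + 1) ^ 2) *
      ∑ i : Fin (n + 1), ∑ j : Fin (n + 1),
        |((∑ k, X k) - X i) / (n : ℝ) - ((∑ k, X k) - X j) / (n : ℝ)| ^ p
      ≤ (1 / ((n : ℝ) + 1) ^ 2) *
        ((2*r) ^ (p-1) / (n:ℝ) ^ p * (((n:ℝ)+1)^2 * r)) := by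
        exact mul_le_mul_of_nonneg_left hbig (by positivity)
    _ = (1 / 2) * (2 * r / (n : ℝ)) ^ p := hfin
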